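/- For every nonnegative integer n, Σ_{j=0}^{n} 2ʲ · C(3n+1, n-j) = Σ_{k=0}^{n} C(3k, k) · C(3n-3k, n-k), where both sides are computed as natural numbers. -/

import Mathlib

open Finset Nat

lemma ruehr_key (d e : ℕ) :
    ((d + e + 3).choose (d + 1) : ℚ) * ((d+1) * ((e+1) * (e+2))) =
    ((d + e).choose d : ℚ) * ((d+e+1) * ((d+e+2) * (d+e+3))) := by
  have h1 := Nat.cast_choose ℚ (show d ≤ d + e by omega)
  have h2 := Nat.cast_choose ℚ (show d + 1 ≤ d + e + 3 by omega)
  have e1 : d + e - d = e := by omega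
  have e2 : d + e + 3 - (d + 1) = e + 2 := by omega
  rw [e1] at h1
  rw [e2] at h2
  rw [h1, h2]
  have f1 : (d+e+3)! = (d+e+3) * ((d+e+2) * ((d+e+1) * (d+e)!)) := by
    rw [show d+e+3 = (d+e+2)+1 by ring, Nat.factorial_succ,
        show d+e+2 = (d+e+1)+1 by ring, Nat.factorial_succ,
        show d+e+1 = (d+e)+1 by ring, Nat.factorial_succ]
  have f2 : (d+1)! = (d+1) * d ! := Nat.factorial_succ d
  have f3 : (e+2)! = (e+2) * ((e+1) * e !) := by
    rw [show e+2 = (e+1)+1 by ring, Nat.factorial_succ, Nat.factorial_succ]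
  rw [f1, f2, f3]
  have n1 : (d ! : ℚ) ≠ 0 := by exact_mod_cast (Nat.factorial_pos d).ne'
  have n2 : (e ! : ℚ) ≠ 0 := by exact_mod_cast (Nat.factorial_pos e).ne'
  have n3 : ((d+e)! : ℚ) ≠ 0 := by exact_mod_cast (Nat.factorial_pos (d+e)).ne'
  push_cast
  field_simp

noncomputable def ruehrB (m : ℕ) : ℚ := ((3*m).choose m : ℚ)

lemma ruehrB_rec (m : ℕ) :
    ruehrB (m+1) * (2*((m:ℚ)+1)*(2*(m:ℚ)+1)) = ruehrB m * (3*(3*(m:ℚ)+1)*(3*(m:ℚ)+2)) := by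
  have h := ruehr_key m (2*m)
  have e1 : m + 2*m + 3 = 3*(m+1) := by ring
  have e2 : m + 2*m = 3*m := by ring
  rw [e1, e2] at h
  unfold ruehrB
  apply mul_right_cancel₀ (b := (m:ℚ)+1) (by positivity)
  push_cast at h ⊢
  linear_combination h

lemma ruehrB_zero : ruehrB 0 = 1 := by simp [ruehrB]

lemma ruehrB_one : ruehrB 1 = 3 := by unfold ruehrB; norm_num

noncomputable def FqR (n k : ℕ) : ℚ := if k ≤ n then ruehrB k * ruehrB (n - k) else 0

noncomputable def GqR (n k : ℕ) : ℚ :=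
  (-4*(k:ℚ)*((3*(n:ℚ)+4)^2 - 3*(k:ℚ)*((n:ℚ)+2)*(6*(n:ℚ)+7) + 2*(k:ℚ)^2*(9*(n:ℚ)+10)))
    / (((n:ℚ)+1)*(3*(n:ℚ)+4-3*(k:ℚ))*(3*(n:ℚ)+5-3*(k:ℚ))) * FqR (n+2) k

lemma termR_main (k m : ℕ) :
    8*(2*((k:ℚ)+m)+3)*((k:ℚ)+m+2) * FqR (k+m+2) k
      - 6*(36*((k:ℚ)+m)^2+99*((k:ℚ)+m)+70) * FqR (k+m+1) k
      + 81*(3*((k:ℚ)+m)+2)*(3*((k:ℚ)+m)+4) * FqR (k+m) k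
    = GqR (k+m) (k+1) - GqR (k+m) k := by
  have hm1 : ruehrB (m+1) = ruehrB m * (3*(3*(m:ℚ)+1)*(3*(m:ℚ)+2)) / (2*((m:ℚ)+1)*(2*(m:ℚ)+1)) := by
    rw [eq_div_iff (by positivity)]; exact ruehrB_rec m
  have hm2 : ruehrB (m+2) = ruehrB (m+1) * (3*(3*(m:ℚ)+4)*(3*(m:ℚ)+5)) / (2*((m:ℚ)+2)*(2*(m:ℚ)+3)) := by
    rw [eq_div_iff (by positivity)]
    have := ruehrB_rec (m+1); push_cast at this; linear_combination this
  have hk1 : ruehrB (k+1) = ruehrB k * (3*(3*(k:ℚ)+1)*(3*(k:ℚ)+2)) / (2*((k:ℚ)+1)*(2*(k:ℚ)+1)) := by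
    rw [eq_div_iff (by positivity)]; exact ruehrB_rec k
  simp only [FqR, GqR]
  rw [if_pos (show k ≤ k+m by omega), if_pos (show k ≤ k+m+1 by omega),
      if_pos (show k ≤ k+m+2 by omega), if_pos (show k+1 ≤ k+m+2 by omega)]
  rw [show k+m-k = m by omega, show k+m+1-k = m+1 by omega,
      show k+m+2-k = m+2 by omega, show k+m+2-(k+1) = m+1 by omega]
  rw [hm2, hm1, hk1]
  have d1 : ((k:ℚ)+(m:ℚ)+1) ≠ 0 := by positivity
  have d2 : (3*((k:ℚ)+(m:ℚ))+4-3*((k:ℚ))) ≠ 0 := by intro h; apply (show (3*(m:ℚ)+4) ≠ 0 by positivity); linarith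
  have d3 : (3*((k:ℚ)+(m:ℚ))+5-3*((k:ℚ))) ≠ 0 := by intro h; apply (show (3*(m:ℚ)+5) ≠ 0 by positivity); linarith
  have d4 : (3*((k:ℚ)+(m:ℚ))+4-3*((k:ℚ)+1)) ≠ 0 := by intro h; apply (show (3*(m:ℚ)+1) ≠ 0 by positivity); linarith
  have d5 : (3*((k:ℚ)+(m:ℚ))+5-3*((k:ℚ)+1)) ≠ 0 := by intro h; apply (show (3*(m:ℚ)+2) ≠ 0 by positivity); linarith
  have d6 : ((m:ℚ)+1) ≠ 0 := by positivity
  have d7 : (2*(m:ℚ)+1) ≠ 0 := by positivity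
  have d8 : ((m:ℚ)+2) ≠ 0 := by positivity
  have d9 : (2*(m:ℚ)+3) ≠ 0 := by positivity
  have d10 : ((k:ℚ)+1) ≠ 0 := by positivity
  have d11 : (2*(k:ℚ)+1) ≠ 0 := by positivity
  have d12 : (3*(m:ℚ)+1) ≠ 0 := by positivity
  have d13 : (3*(m:ℚ)+2) ≠ 0 := by positivity
  have d14 : (3*(m:ℚ)+4) ≠ 0 := by positivity
  have d15 : (3*(m:ℚ)+5) ≠ 0 := by positivity
  push_cast
  rw [show (3*((k:ℚ)+(m:ℚ))+4-3*((k:ℚ))) = 3*(m:ℚ)+4 by ring,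
    show (3*((k:ℚ)+(m:ℚ))+5-3*((k:ℚ))) = 3*(m:ℚ)+5 by ring,
    show (3*((k:ℚ)+(m:ℚ))+4-3*((k:ℚ)+1)) = 3*(m:ℚ)+1 by ring,
    show (3*((k:ℚ)+(m:ℚ))+5-3*((k:ℚ)+1)) = 3*(m:ℚ)+2 by ring]
  field_simp
  ring

lemma termR_b1 (n : ℕ) :
    8*(2*(n:ℚ)+3)*((n:ℚ)+2) * FqR (n+2) (n+1)
      - 6*(36*(n:ℚ)^2+99*(n:ℚ)+70) * FqR (n+1) (n+1)
      + 81*(3*(n:ℚ)+2)*(3*(n:ℚ)+4) * FqR n (n+1)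
    = GqR n (n+2) - GqR n (n+1) := by
  have hk1 : ruehrB (n+2) = ruehrB (n+1) * (3*(3*((n:ℚ)+1)+1)*(3*((n:ℚ)+1)+2)) / (2*((n:ℚ)+2)*(2*(n:ℚ)+3)) := by
    rw [eq_div_iff (by positivity)]
    have := ruehrB_rec (n+1); push_cast at this; linear_combination this
  simp only [FqR, GqR]
  rw [if_neg (show ¬(n+1 ≤ n) by omega), if_pos (show n+1 ≤ n+1 by omega),
      if_pos (show n+1 ≤ n+2 by omega), if_pos (show n+2 ≤ n+2 by omega)]
  rw [show n+1-(n+1) = 0 by omega, show n+2-(n+1) = 1 by omega, show n+2-(n+2) = 0 by omega]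
  rw [ruehrB_zero, ruehrB_one, hk1]
  have d2 : (3*(n:ℚ)+4-3*((n:ℚ)+1)) ≠ 0 := by intro h; linarith
  have d3 : (3*(n:ℚ)+5-3*((n:ℚ)+1)) ≠ 0 := by intro h; linarith
  have d4 : (3*(n:ℚ)+4-3*((n:ℚ)+2)) ≠ 0 := by intro h; linarith
  have d5 : (3*(n:ℚ)+5-3*((n:ℚ)+2)) ≠ 0 := by intro h; linarith
  have d1 : ((n:ℚ)+1) ≠ 0 := by positivity
  have d8 : ((n:ℚ)+2) ≠ 0 := by positivity
  have d9 : (2*(n:ℚ)+3) ≠ 0 := by positivity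
  push_cast
  field_simp
  ring

lemma termR_b2 (n : ℕ) :
    8*(2*(n:ℚ)+3)*((n:ℚ)+2) * FqR (n+2) (n+2)
      - 6*(36*(n:ℚ)^2+99*(n:ℚ)+70) * FqR (n+1) (n+2)
      + 81*(3*(n:ℚ)+2)*(3*(n:ℚ)+4) * FqR n (n+2)
    = GqR n (n+3) - GqR n (n+2) := by
  simp only [FqR, GqR]
  rw [if_neg (show ¬(n+2 ≤ n) by omega), if_neg (show ¬(n+2 ≤ n+1) by omega),
      if_neg (show ¬(n+3 ≤ n+2) by omega), if_pos (show n+2 ≤ n+2 by omega)]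
  rw [show n+2-(n+2) = 0 by omega, ruehrB_zero]
  have d4 : (3*(n:ℚ)+4-3*((n:ℚ)+2)) ≠ 0 := by intro h; linarith
  have d5 : (3*(n:ℚ)+5-3*((n:ℚ)+2)) ≠ 0 := by intro h; linarith
  have d1 : ((n:ℚ)+1) ≠ 0 := by positivity
  push_cast
  field_simp
  ring

lemma termR (n k : ℕ) (h : k < n+3) :
    8*(2*(n:ℚ)+3)*((n:ℚ)+2) * FqR (n+2) k
      - 6*(36*(n:ℚ)^2+99*(n:ℚ)+70) * FqR (n+1) k
      + 81*(3*(n:ℚ)+2)*(3*(n:ℚ)+4) * FqR n k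
    = GqR n (k+1) - GqR n k := by
  rcases (show k ≤ n ∨ k = n+1 ∨ k = n+2 by omega) with hk | hk | hk
  · obtain ⟨m, rfl⟩ : ∃ m, n = k + m := ⟨n - k, by omega⟩
    have := termR_main k m
    push_cast at this ⊢
    linear_combination this
  · subst hk; exact termR_b1 n
  · subst hk; exact termR_b2 n

noncomputable def SRq (n : ℕ) : ℚ := ∑ k ∈ range (n+1), ruehrB k * ruehrB (n-k)

lemma recR (n : ℕ) :
    8*(2*(n:ℚ)+3)*((n:ℚ)+2) * SRq (n+2) + 81*(3*(n:ℚ)+2)*(3*(n:ℚ)+4) * SRq n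
    = 6*(36*(n:ℚ)^2+99*(n:ℚ)+70) * SRq (n+1) := by
  have tele : ∑ k ∈ range (n+3),
      (8*(2*(n:ℚ)+3)*((n:ℚ)+2) * FqR (n+2) k
        - 6*(36*(n:ℚ)^2+99*(n:ℚ)+70) * FqR (n+1) k
        + 81*(3*(n:ℚ)+2)*(3*(n:ℚ)+4) * FqR n k) = 0 := by
    rw [Finset.sum_congr rfl (fun k hk => termR n k (mem_range.mp hk)),
        Finset.sum_range_sub (GqR n)]
    have g0 : GqR n 0 = 0 := by simp [GqR]
    have g1 : GqR n (n+3) = 0 := by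
      have : FqR (n+2) (n+3) = 0 := by simp [FqR]
      simp [GqR, this]
    rw [g0, g1, sub_zero]
  have s2 : ∑ k ∈ range (n+3), FqR (n+2) k = SRq (n+2) := by
    rw [SRq, show n+2+1 = n+3 by omega]
    apply Finset.sum_congr rfl
    intro k hk
    rw [FqR, if_pos (show k ≤ n+2 by have := mem_range.mp hk; omega)]
  have s1 : ∑ k ∈ range (n+3), FqR (n+1) k = SRq (n+1) := by
    rw [show n+3 = (n+2)+1 by omega, Finset.sum_range_succ]
    have last : FqR (n+1) (n+2) = 0 := by rw [FqR, if_neg (by omega)]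
    rw [last, add_zero, SRq]
    apply Finset.sum_congr rfl
    intro k hk
    rw [FqR, if_pos (show k ≤ n+1 by have := mem_range.mp hk; omega)]
  have s0 : ∑ k ∈ range (n+3), FqR n k = SRq n := by
    rw [show n+3 = (n+1)+1+1 by omega, Finset.sum_range_succ, Finset.sum_range_succ]
    have l1 : FqR n (n+2) = 0 := by rw [FqR, if_neg (by omega)]
    have l2 : FqR n (n+1) = 0 := by rw [FqR, if_neg (by omega)]
    rw [l1, l2, add_zero, add_zero, SRq]
    apply Finset.sum_congr rfl
    intro k hk
    rw [FqR, if_pos (show k ≤ n by have := mem_range.mp hk; omega)]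
  simp only [Finset.sum_add_distrib, Finset.sum_sub_distrib, ← Finset.mul_sum] at tele
  rw [s2, s1, s0] at tele
  linarith

noncomputable def FqL (n j : ℕ) : ℚ := if j ≤ n then (2:ℚ)^j * ((3*n+1).choose (n-j) : ℚ) else 0

noncomputable def PLq (n k : ℚ) : ℚ :=
  -140*k + 272*k^2 - 75*k^3 - 137*k^4 - 37*k^5 - 3*k^6
  + n*(-226*k + 501*k^2 - 276*k^3 - 195*k^4 - 24*k^5)
  + n^2*(-118*k + 291*k^2 - 230*k^3 - 63*k^4)
  + n^3*(-20*k + 54*k^2 - 54*k^3)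

noncomputable def GqL (n j : ℕ) : ℚ :=
  PLq (n:ℚ) (j:ℚ) / (((n:ℚ)+1)*((n:ℚ)+2)*(3*(n:ℚ)+5)*(3*(n:ℚ)+7)) * FqL (n+2) j

set_option maxHeartbeats 1000000 in
lemma termL_main (j t : ℕ) :
    8*(2*((j:ℚ)+t)+3)*((j:ℚ)+t+2) * FqL (j+t+2) j
      - 6*(36*((j:ℚ)+t)^2+99*((j:ℚ)+t)+70) * FqL (j+t+1) j
      + 81*(3*((j:ℚ)+t)+2)*(3*((j:ℚ)+t)+4) * FqL (j+t) j
    = GqL (j+t) (j+1) - GqL (j+t) j := by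
  have h1 := ruehr_key t (3*j+2*t+1)
  rw [show t + (3*j+2*t+1) + 3 = 3*(j+t+1)+1 by ring, show t + (3*j+2*t+1) = 3*(j+t)+1 by ring] at h1
  have h2 := ruehr_key (t+1) (3*j+2*t+3)
  rw [show (t+1) + (3*j+2*t+3) + 3 = 3*(j+t+2)+1 by ring, show (t+1) + (3*j+2*t+3) = 3*(j+t+1)+1 by ring] at h2
  have h3 := Nat.choose_succ_right_eq (3*(j+t+2)+1) (t+1)
  rw [show 3*(j+t+2)+1 - (t+1) = 3*j+2*t+6 by omega] at h3
  have h3q : ((3*(j+t+2)+1).choose (t+1+1) : ℚ) * ((t:ℚ)+1+1) = ((3*(j+t+2)+1).choose (t+1) : ℚ) * (3*(j:ℚ)+2*(t:ℚ)+6) := by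
    exact_mod_cast congrArg (fun x : ℕ => (x : ℚ)) h3
  simp only [FqL, GqL, PLq]
  rw [if_pos (show j ≤ j+t by omega), if_pos (show j ≤ j+t+1 by omega),
      if_pos (show j ≤ j+t+2 by omega), if_pos (show j+1 ≤ j+t+2 by omega)]
  rw [show j+t-j = t by omega, show j+t+1-j = t+1 by omega,
      show j+t+2-j = t+2 by omega, show j+t+2-(j+1) = t+1 by omega]
  push_cast at h1 h2 h3q ⊢
  have hQd : ((((j:ℚ)+(t:ℚ))+1)*(((j:ℚ)+(t:ℚ))+2)*(3*((j:ℚ)+(t:ℚ))+5)*(3*((j:ℚ)+(t:ℚ))+7)) ≠ 0 := by positivity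
  have hD : ((((t:ℚ)+1)*(3*(j:ℚ)+2*(t:ℚ)+2)*(3*(j:ℚ)+2*(t:ℚ)+3))*((((t:ℚ)+2)*(3*(j:ℚ)+2*(t:ℚ)+4)*(3*(j:ℚ)+2*(t:ℚ)+5))*(3*(j:ℚ)+2*(t:ℚ)+6))) ≠ 0 := by positivity
  rw [div_mul_eq_mul_div, div_mul_eq_mul_div, div_sub_div_same, eq_div_iff hQd]
  apply mul_right_cancel₀ hD
  linear_combination (((-(6*(36*((j:ℚ)+(t:ℚ))^2+99*((j:ℚ)+(t:ℚ))+70))*(2:ℚ)^j*((((j:ℚ)+(t:ℚ))+1)*(((j:ℚ)+(t:ℚ))+2)*(3*((j:ℚ)+(t:ℚ))+5)*(3*((j:ℚ)+(t:ℚ))+7)))*(((t:ℚ)+2)*(3*(j:ℚ)+2*(t:ℚ)+4)*(3*(j:ℚ)+2*(t:ℚ)+5))*(3*(j:ℚ)+2*(t:ℚ)+6) + ((8*(2*((j:ℚ)+(t:ℚ))+3)*(((j:ℚ)+(t:ℚ))+2))*(2:ℚ)^j*((((j:ℚ)+(t:ℚ))+1)*(((j:ℚ)+(t:ℚ))+2)*(3*((j:ℚ)+(t:ℚ))+5)*(3*((j:ℚ)+(t:ℚ))+7))+(-140*(j:ℚ)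 + 272*(j:ℚ)^2 - 75*(j:ℚ)^3 - 137*(j:ℚ)^4 - 37*(j:ℚ)^5 - 3*(j:ℚ)^6 + ((j:ℚ)+(t:ℚ))*(-226*(j:ℚ) + 501*(j:ℚ)^2 - 276*(j:ℚ)^3 - 195*(j:ℚ)^4 - 24*(j:ℚ)^5) + ((j:ℚ)+(t:ℚ))^2*(-118*(j:ℚ) + 291*(j:ℚ)^2 - 230*(j:ℚ)^3 - 63*(j:ℚ)^4) + ((j:ℚ)+(t:ℚ))^3*(-20*(j:ℚ) + 54*(j:ℚ)^2 - 54*(j:ℚ)^3))*(2:ℚ)^j)*((3*(j:ℚ)+3*(t:ℚ)+5)*(3*(j:ℚ)+3*(t:ℚ)+6)*(3*(j:ℚ)+3*(t:ℚ)+7))*(3*(j:ℚ)+2*(t:ℚ)+6) + (-2*(2:ℚ)^j*(-140*((j:ℚ)+1) + 272*((j:ℚ)+1)^2 - 75*((j:ℚ)+1)^3 - 137*((j:ℚ)+1)^4 - 37*((j:ℚ)+1)^5 - 3*((j:ℚ)+1)^6 + ((j:ℚ)+(t:ℚ))*(-226*((j:ℚ)+1) + 501*((j:ℚ)+1)^2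 - 276*((j:ℚ)+1)^3 - 195*((j:ℚ)+1)^4 - 24*((j:ℚ)+1)^5) + ((j:ℚ)+(t:ℚ))^2*(-118*((j:ℚ)+1) + 291*((j:ℚ)+1)^2 - 230*((j:ℚ)+1)^3 - 63*((j:ℚ)+1)^4) + ((j:ℚ)+(t:ℚ))^3*(-20*((j:ℚ)+1) + 54*((j:ℚ)+1)^2 - 54*((j:ℚ)+1)^3)))*((3*(j:ℚ)+3*(t:ℚ)+5)*(3*(j:ℚ)+3*(t:ℚ)+6)*(3*(j:ℚ)+3*(t:ℚ)+7))*((t:ℚ)+2)))*h1 + ((((8*(2*((j:ℚ)+(t:ℚ))+3)*(((j:ℚ)+(t:ℚ))+2))*(2:ℚ)^j*((((j:ℚ)+(t:ℚ))+1)*(((j:ℚ)+(t:ℚ))+2)*(3*((j:ℚ)+(t:ℚ))+5)*(3*((j:ℚ)+(t:ℚ))+7))+(-140*(j:ℚ) + 272*(j:ℚ)^2 - 75*(j:ℚ)^3 - 137*(j:ℚ)^4 - 37*(j:ℚ)^5 - 3*(j:ℚ)^6 + ((j:ℚ)+(t:ℚ))*(-226*(j:ℚ) + 501*(j:ℚ)^2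 - 276*(j:ℚ)^3 - 195*(j:ℚ)^4 - 24*(j:ℚ)^5) + ((j:ℚ)+(t:ℚ))^2*(-118*(j:ℚ) + 291*(j:ℚ)^2 - 230*(j:ℚ)^3 - 63*(j:ℚ)^4) + ((j:ℚ)+(t:ℚ))^3*(-20*(j:ℚ) + 54*(j:ℚ)^2 - 54*(j:ℚ)^3))*(2:ℚ)^j)*(((t:ℚ)+1)*(3*(j:ℚ)+2*(t:ℚ)+2)*(3*(j:ℚ)+2*(t:ℚ)+3))*(3*(j:ℚ)+2*(t:ℚ)+6) + (-2*(2:ℚ)^j*(-140*((j:ℚ)+1) + 272*((j:ℚ)+1)^2 - 75*((j:ℚ)+1)^3 - 137*((j:ℚ)+1)^4 - 37*((j:ℚ)+1)^5 - 3*((j:ℚ)+1)^6 + ((j:ℚ)+(t:ℚ))*(-226*((j:ℚ)+1) + 501*((j:ℚ)+1)^2 - 276*((j:ℚ)+1)^3 - 195*((j:ℚ)+1)^4 - 24*((j:ℚ)+1)^5) + ((j:ℚ)+(t:ℚ))^2*(-118*((j:ℚ)+1) + 291*((j:ℚ)+1)^2 - 230*((j:ℚ)+1)^3 - 63*((j:ℚ)+1)^4)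 + ((j:ℚ)+(t:ℚ))^3*(-20*((j:ℚ)+1) + 54*((j:ℚ)+1)^2 - 54*((j:ℚ)+1)^3)))*(((t:ℚ)+1)*(3*(j:ℚ)+2*(t:ℚ)+2)*(3*(j:ℚ)+2*(t:ℚ)+3))*((t:ℚ)+2)))*h2 + ((-(-2*(2:ℚ)^j*(-140*((j:ℚ)+1) + 272*((j:ℚ)+1)^2 - 75*((j:ℚ)+1)^3 - 137*((j:ℚ)+1)^4 - 37*((j:ℚ)+1)^5 - 3*((j:ℚ)+1)^6 + ((j:ℚ)+(t:ℚ))*(-226*((j:ℚ)+1) + 501*((j:ℚ)+1)^2 - 276*((j:ℚ)+1)^3 - 195*((j:ℚ)+1)^4 - 24*((j:ℚ)+1)^5) + ((j:ℚ)+(t:ℚ))^2*(-118*((j:ℚ)+1) + 291*((j:ℚ)+1)^2 - 230*((j:ℚ)+1)^3 - 63*((j:ℚ)+1)^4) + ((j:ℚ)+(t:ℚ))^3*(-20*((j:ℚ)+1) + 54*((j:ℚ)+1)^2 - 54*((j:ℚ)+1)^3)))*(((t:ℚ)+1)*(3*(j:ℚ)+2*(t:ℚ)+2)*(3*(j:ℚ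)+2*(t:ℚ)+3))*(((t:ℚ)+2)*(3*(j:ℚ)+2*(t:ℚ)+4)*(3*(j:ℚ)+2*(t:ℚ)+5))))*h3q

lemma termL_b1 (n : ℕ) :
    8*(2*(n:ℚ)+3)*((n:ℚ)+2) * FqL (n+2) (n+1)
      - 6*(36*(n:ℚ)^2+99*(n:ℚ)+70) * FqL (n+1) (n+1)
      + 81*(3*(n:ℚ)+2)*(3*(n:ℚ)+4) * FqL n (n+1)
    = GqL n (n+2) - GqL n (n+1) := by
  simp only [FqL, GqL, PLq]
  rw [if_neg (show ¬(n+1 ≤ n) by omega), if_pos (show n+1 ≤ n+1 by omega),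
      if_pos (show n+1 ≤ n+2 by omega), if_pos (show n+2 ≤ n+2 by omega)]
  rw [show n+1-(n+1) = 0 by omega, show n+2-(n+1) = 1 by omega, show n+2-(n+2) = 0 by omega,
      Nat.choose_zero_right, Nat.choose_one_right, Nat.choose_zero_right]
  have hQd : (((n:ℚ)+1)*((n:ℚ)+2)*(3*(n:ℚ)+5)*(3*(n:ℚ)+7)) ≠ 0 := by positivity
  push_cast
  rw [div_mul_eq_mul_div, div_mul_eq_mul_div, div_sub_div_same, eq_div_iff hQd]
  ring

lemma termL_b2 (n : ℕ) :
    8*(2*(n:ℚ)+3)*((n:ℚ)+2) * FqL (n+2) (n+2)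
      - 6*(36*(n:ℚ)^2+99*(n:ℚ)+70) * FqL (n+1) (n+2)
      + 81*(3*(n:ℚ)+2)*(3*(n:ℚ)+4) * FqL n (n+2)
    = GqL n (n+3) - GqL n (n+2) := by
  simp only [FqL, GqL, PLq]
  rw [if_neg (show ¬(n+2 ≤ n) by omega), if_neg (show ¬(n+2 ≤ n+1) by omega),
      if_neg (show ¬(n+3 ≤ n+2) by omega), if_pos (show n+2 ≤ n+2 by omega)]
  rw [show n+2-(n+2) = 0 by omega, Nat.choose_zero_right]
  have hQd : (((n:ℚ)+1)*((n:ℚ)+2)*(3*(n:ℚ)+5)*(3*(n:ℚ)+7)) ≠ 0 := by positivity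
  push_cast
  simp only [mul_zero, sub_zero, add_zero, zero_sub]
  rw [div_mul_eq_mul_div, ← neg_div, eq_div_iff hQd]
  ring

lemma termL (n j : ℕ) (h : j < n+3) :
    8*(2*(n:ℚ)+3)*((n:ℚ)+2) * FqL (n+2) j
      - 6*(36*(n:ℚ)^2+99*(n:ℚ)+70) * FqL (n+1) j
      + 81*(3*(n:ℚ)+2)*(3*(n:ℚ)+4) * FqL n j
    = GqL n (j+1) - GqL n j := by
  rcases (show j ≤ n ∨ j = n+1 ∨ j = n+2 by omega) with hj | hj | hj
  · obtain ⟨t, rfl⟩ : ∃ t, n = j + t := ⟨n - j, by omega⟩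
    have := termL_main j t
    push_cast at this ⊢
    linear_combination this
  · subst hj; exact termL_b1 n
  · subst hj; exact termL_b2 n

noncomputable def SLq (n : ℕ) : ℚ := ∑ j ∈ range (n+1), (2:ℚ)^j * ((3*n+1).choose (n-j) : ℚ)

lemma recL (n : ℕ) :
    8*(2*(n:ℚ)+3)*((n:ℚ)+2) * SLq (n+2) + 81*(3*(n:ℚ)+2)*(3*(n:ℚ)+4) * SLq n
    = 6*(36*(n:ℚ)^2+99*(n:ℚ)+70) * SLq (n+1) := by
  have tele : ∑ j ∈ range (n+3),
      (8*(2*(n:ℚ)+3)*((n:ℚ)+2) * FqL (n+2) j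
        - 6*(36*(n:ℚ)^2+99*(n:ℚ)+70) * FqL (n+1) j
        + 81*(3*(n:ℚ)+2)*(3*(n:ℚ)+4) * FqL n j) = 0 := by
    rw [Finset.sum_congr rfl (fun j hj => termL n j (mem_range.mp hj)),
        Finset.sum_range_sub (GqL n)]
    have g0 : GqL n 0 = 0 := by simp [GqL, PLq]
    have g1 : GqL n (n+3) = 0 := by
      have : FqL (n+2) (n+3) = 0 := by simp [FqL]
      simp [GqL, this]
    rw [g0, g1, sub_zero]
  have s2 : ∑ j ∈ range (n+3), FqL (n+2) j = SLq (n+2) := by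
    rw [SLq, show n+2+1 = n+3 by omega]
    apply Finset.sum_congr rfl
    intro j hj
    rw [FqL, if_pos (show j ≤ n+2 by have := mem_range.mp hj; omega)]
  have s1 : ∑ j ∈ range (n+3), FqL (n+1) j = SLq (n+1) := by
    rw [show n+3 = (n+2)+1 by omega, Finset.sum_range_succ]
    have last : FqL (n+1) (n+2) = 0 := by rw [FqL, if_neg (by omega)]
    rw [last, add_zero, SLq]
    apply Finset.sum_congr rfl
    intro j hj
    rw [FqL, if_pos (show j ≤ n+1 by have := mem_range.mp hj; omega)]
  have s0 : ∑ j ∈ range (n+3), FqL n j = SLq n := by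
    rw [show n+3 = (n+1)+1+1 by omega, Finset.sum_range_succ, Finset.sum_range_succ]
    have l1 : FqL n (n+2) = 0 := by rw [FqL, if_neg (by omega)]
    have l2 : FqL n (n+1) = 0 := by rw [FqL, if_neg (by omega)]
    rw [l1, l2, add_zero, add_zero, SLq]
    apply Finset.sum_congr rfl
    intro j hj
    rw [FqL, if_pos (show j ≤ n by have := mem_range.mp hj; omega)]
  simp only [Finset.sum_add_distrib, Finset.sum_sub_distrib, ← Finset.mul_sum] at tele
  rw [s2, s1, s0] at tele
  linarith

lemma SLR : ∀ n : ℕ, SLq n = SRq n ∧ SLq (n+1) = SRq (n+1) := by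
  intro n
  induction n with
  | zero =>
    constructor
    · simp [SLq, SRq, ruehrB, Finset.sum_range_one]
    · rw [SLq, SRq]
      norm_num [Finset.sum_range_succ, ruehrB]
  | succ m ih =>
    refine ⟨ih.2, ?_⟩
    have hc : (8*(2*(m:ℚ)+3)*((m:ℚ)+2)) ≠ 0 := by positivity
    have goal2 : 8*(2*(m:ℚ)+3)*((m:ℚ)+2) * SLq (m+2) = 8*(2*(m:ℚ)+3)*((m:ℚ)+2) * SRq (m+2) := by
      linear_combination recL m - recR m - 81*(3*(m:ℚ)+2)*(3*(m:ℚ)+4)*ih.1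
        + 6*(36*(m:ℚ)^2+99*(m:ℚ)+70)*ih.2
    have := mul_left_cancel₀ hc goal2
    push_cast at this ⊢
    exact this

theorem ruehr_sum_eq_a006256 (n : ℕ) :
    ∑ j ∈ Finset.range (n + 1), 2 ^ j * Nat.choose (3 * n + 1) (n - j) =
      ∑ k ∈ Finset.range (n + 1), Nat.choose (3 * k) k * Nat.choose (3 * n - 3 * k) (n - k) := by
  have h := (SLR n).1
  simp only [SLq, SRq, ruehrB] at h
  have e : ∑ k ∈ range (n+1), (3*k).choose k * (3*n-3*k).choose (n-k)
         = ∑ k ∈ range (n+1), (3*k).choose k * (3*(n-k)).choose (n-k) := by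
    apply Finset.sum_congr rfl
    intro k hk
    rw [show 3*n-3*k = 3*(n-k) by have := mem_range.mp hk; omega]
  rw [e]
  exact_mod_cast h
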